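/- Let H be an N×N Jacobi matrix with positive off-diagonals, and suppose the spectra of the two blocks H_- and H_+ (obtained by deleting row and column n) are disjoint. Then for each eigenvalue μ_i^- of H_-, the quantity β_i^- := −(Π_{j=1}^N (μ_i^- − λ_j)) / (Π_{l≠i}(μ_i^- − μ_l^-) · Π_{l=1}^{N-n}(μ_i^- − μ_l^+)) is strictly positive, and a_{n-1}² = Σ_{i=1}^{n-1} β_i^-, where λ_j are the eigenvalues of H and μ_l^± those of H_±. -/

import Mathlib

open Matrix Polynomial BigOperators

def blk {N : ℕ} (H : Matrix (Fin N) (Fin N) ℝ) (s k : ℕ) (h : s + k ≤ N) :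
    Matrix (Fin k) (Fin k) ℝ :=
  H.submatrix (fun i => ⟨s + i, by have := i.isLt; omega⟩)
    (fun i => ⟨s + i, by have := i.isLt; omega⟩)

/-- Total version of the matrix entries. -/
noncomputable def Hf {N : ℕ} (H : Matrix (Fin N) (Fin N) ℝ) (i j : ℕ) : ℝ :=
  if h : i < N ∧ j < N then H ⟨i, h.1⟩ ⟨j, h.2⟩ else 0

lemma Hf_eq {N : ℕ} (H : Matrix (Fin N) (Fin N) ℝ) (i j : Fin N) :
    Hf H i j = H i j := by
  rw [Hf, dif_pos ⟨i.isLt, j.isLt⟩]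


lemma blk_congr {N : ℕ} (H : Matrix (Fin N) (Fin N) ℝ) {s k k' : ℕ} (hk : k = k')
    {h : s + k ≤ N} {h' : s + k' ≤ N} :
    (blk H s k h).charpoly = (blk H s k' h').charpoly := by subst hk; rfl

lemma blk_zero {N : ℕ} (H : Matrix (Fin N) (Fin N) ℝ) (s : ℕ) {h : s + 0 ≤ N} :
    (blk H s 0 h).charpoly = 1 := by
  rw [Matrix.charpoly, Matrix.det_fin_zero]

lemma blk_one {N : ℕ} (H : Matrix (Fin N) (Fin N) ℝ) (s : ℕ) {h : s + 1 ≤ N} :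
    (blk H s 1 h).charpoly = X - C (Hf H s s) := by
  rw [Matrix.charpoly, Matrix.det_fin_one, charmatrix_apply_eq]
  congr 1
  rw [Hf, dif_pos ⟨by omega, by omega⟩]
  rfl


lemma blk_rec {N : ℕ} (H : Matrix (Fin N) (Fin N) ℝ)
    (htri : ∀ i j : Fin N, (i : ℕ) + 1 < (j : ℕ) → H i j = 0)
    (hsym : H.IsSymm) (s k : ℕ) (h : s + k + 2 ≤ N) :
    (blk H s (k + 2) (by omega)).charpoly
      = (X - C (Hf H (s + k + 1) (s + k + 1))) *
          (blk H s (k + 1) (by omega)).charpoly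
        - C (Hf H (s + k) (s + k + 1) ^ 2) *
          (blk H s k (by omega)).charpoly := by
  have htrif : ∀ i j : ℕ, i + 1 < j → Hf H i j = 0 := by
    intro i j hij
    rw [Hf]
    split
    · next hh => exact htri _ _ hij
    · rfl
  have hlowf : ∀ i j : ℕ, j + 1 < i → Hf H i j = 0 := by
    intro i j hij
    rw [Hf]
    split
    · next hh =>
        have := congrFun (congrFun hsym ⟨j, hh.2⟩) ⟨i, hh.1⟩
        rw [Matrix.transpose_apply] at this
        rw [this]
        exact htri _ _ hij
    · rfl
  set M := charmatrix (blk H s (k + 2) (by omega : s + (k+2) ≤ N)) with hM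
  have hMne : ∀ (i j : Fin (k+2)), i ≠ j → M i j = -C (Hf H (s + i) (s + j)) := by
    intro i j hij
    rw [hM, charmatrix_apply_ne _ _ _ hij]
    congr 1
    rw [Hf, dif_pos ⟨by have := i.isLt; omega, by have := j.isLt; omega⟩]
    rfl
  have hMeq : ∀ (i : Fin (k+2)), M i i = X - C (Hf H (s + i) (s + i)) := by
    intro i
    rw [hM, charmatrix_apply_eq]
    congr 1
    rw [Hf, dif_pos ⟨by have := i.isLt; omega, by have := i.isLt; omega⟩]
    rfl
  have minor_eq : ∀ (m : ℕ) (hsm : s + m ≤ N) (e f : Fin m → Fin (k+2)),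
      (∀ i, (e i : ℕ) = (i : ℕ)) → (∀ i, (f i : ℕ) = (i : ℕ)) →
      (M.submatrix e f).det = (blk H s m hsm).charpoly := by
    intro m hsm e f he hf
    have : M.submatrix e f = charmatrix (blk H s m hsm) := by
      ext i j
      by_cases hij : i = j
      · subst hij
        have hef : e i = f i := Fin.ext (by rw [he, hf])
        rw [Matrix.submatrix_apply, hef, hMeq, charmatrix_apply_eq, hf]
        congr 1
        rw [Hf, dif_pos ⟨by have := i.isLt; omega, by have := i.isLt; omega⟩]
        rfl
      · have hne : e i ≠ f j := fun hh => hij (Fin.ext (by rw [← he i, ← hf j, hh]))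
        rw [Matrix.submatrix_apply, hMne _ _ hne, charmatrix_apply_ne _ _ _ hij, he, hf]
        congr 2
        rw [Hf, dif_pos ⟨by have := i.isLt; omega, by have := j.isLt; omega⟩]
        rfl
    rw [this]
    rfl
  have hcp : (blk H s (k + 2) (by omega : s + (k+2) ≤ N)).charpoly = M.det := rfl
  rw [hcp, Matrix.det_succ_row M (Fin.last (k+1))]
  have hkne : (⟨k, by omega⟩ : Fin (k+2)) ≠ Fin.last (k+1) := by
    intro hh
    have := congrArg Fin.val hh
    simp [Fin.last] at this
  have key : ∀ j ∈ (Finset.univ : Finset (Fin (k+2))),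
      j ∉ ({(⟨k, by omega⟩ : Fin (k+2)), Fin.last (k+1)} : Finset (Fin (k+2))) →
      (-1 : ℝ[X]) ^ ((Fin.last (k+1) : ℕ) + (j : ℕ)) * M (Fin.last (k+1)) j *
        det (M.submatrix (Fin.last (k+1)).succAbove j.succAbove) = 0 := by
    intro j _ hj
    simp only [Finset.mem_insert, Finset.mem_singleton] at hj
    push_neg at hj
    have h1 : (j : ℕ) ≠ k := fun hh => hj.1 (Fin.ext hh)
    have h2 : (j : ℕ) ≠ k + 1 := fun hh => hj.2 (Fin.ext hh)
    have h3 : (j : ℕ) < k := by have := j.isLt; omega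
    have hne : Fin.last (k+1) ≠ j := by
      intro hh; have := congrArg Fin.val hh; simp [Fin.last] at this; omega
    rw [hMne _ _ hne, hlowf _ _ (by simp [Fin.last]; omega)]
    simp
  rw [← Finset.sum_subset (Finset.subset_univ _) key]
  rw [Finset.sum_insert (by simp only [Finset.mem_singleton]; exact hkne), Finset.sum_singleton]
  have hsal : (Fin.last (k+1)).succAbove = Fin.castSucc := Fin.succAbove_last
  have hterm2 : (-1 : ℝ[X]) ^ ((Fin.last (k+1) : ℕ) + ((Fin.last (k+1)) : ℕ)) *
      M (Fin.last (k+1)) (Fin.last (k+1)) *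
      (M.submatrix (Fin.last (k+1)).succAbove (Fin.last (k+1)).succAbove).det
      = (X - C (Hf H (s + k + 1) (s + k + 1))) *
          (blk H s (k + 1) (by omega)).charpoly := by
    rw [hsal, hMeq, minor_eq (k+1) (by omega) _ _ (fun i => Fin.coe_castSucc i)
      (fun i => Fin.coe_castSucc i)]
    have hsign : ((Fin.last (k+1) : Fin (k+2)) : ℕ) + ((Fin.last (k+1) : Fin (k+2)) : ℕ)
        = 2*(k+1) := by simp [Fin.last]; ring
    rw [hsign]
    have hval : s + ((Fin.last (k+1) : Fin (k+2)) : ℕ) = s + k + 1 := by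
      simp [Fin.last]; omega
    rw [hval]
    simp [pow_mul]
  have hterm1 : (-1 : ℝ[X]) ^ ((Fin.last (k+1) : ℕ) + ((⟨k, by omega⟩ : Fin (k+2)) : ℕ)) *
      M (Fin.last (k+1)) ⟨k, by omega⟩ *
      (M.submatrix (Fin.last (k+1)).succAbove (⟨k, by omega⟩ : Fin (k+2)).succAbove).det
      = - (C (Hf H (s + k) (s + k + 1) ^ 2) *
          (blk H s k (by omega)).charpoly) := by
    rw [hsal]
    have hsymf : Hf H (s + k + 1) (s + k) = Hf H (s + k) (s + k + 1) := by
      rw [Hf, Hf]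
      split
      · next hh =>
          rw [dif_pos ⟨hh.2, hh.1⟩]
          have := congrFun (congrFun hsym ⟨s + k + 1, hh.1⟩) ⟨s + k, hh.2⟩
          rw [Matrix.transpose_apply] at this
          exact this.symm
      · next hh => rw [dif_neg (fun hc => hh ⟨hc.2, hc.1⟩)]
    have hent : M (Fin.last (k+1)) ⟨k, by omega⟩ = -C (Hf H (s + k) (s + k + 1)) := by
      rw [hMne _ _ (Ne.symm hkne)]
      have : s + ((Fin.last (k+1) : Fin (k+2)) : ℕ) = s + k + 1 := by simp [Fin.last]; omega
      rw [this]
      show -C (Hf H (s + k + 1) (s + k)) = _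
      rw [hsymf]
    rw [hent]
    have hdetB : (M.submatrix Fin.castSucc (⟨k, by omega⟩ : Fin (k+2)).succAbove).det
        = -C (Hf H (s + k) (s + k + 1)) * (blk H s k (by omega)).charpoly := by
      set B := M.submatrix Fin.castSucc (⟨k, by omega⟩ : Fin (k+2)).succAbove with hB
      rw [Matrix.det_succ_column B (Fin.last k)]
      have hsk : (⟨k, by omega⟩ : Fin (k+2)).succAbove (Fin.last k) = Fin.last (k+1) := by
        rw [Fin.succAbove_of_le_castSucc _ _ (by simp [Fin.le_def, Fin.last])]
        exact Fin.succ_last k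
      have key2 : ∀ i ∈ (Finset.univ : Finset (Fin (k+1))),
          i ∉ ({Fin.last k} : Finset (Fin (k+1))) →
          (-1 : ℝ[X]) ^ ((i : ℕ) + ((Fin.last k) : ℕ)) * B i (Fin.last k) *
            (B.submatrix i.succAbove (Fin.last k).succAbove).det = 0 := by
        intro i _ hi
        simp only [Finset.mem_singleton] at hi
        have h0 : (i : ℕ) ≠ k := fun hh => hi (Fin.ext (by simp [Fin.last, hh]))
        have h1 : (i : ℕ) < k := by have := i.isLt; omega
        have hBi : B i (Fin.last k) = M (Fin.castSucc i) (Fin.last (k+1)) := by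
          rw [hB, Matrix.submatrix_apply, hsk]
        rw [hBi, hMne _ _ (by intro hh; have := congrArg Fin.val hh; simp [Fin.last] at this; omega),
          htrif _ _ (by simp [Fin.last]; omega)]
        simp
      rw [← Finset.sum_subset (Finset.subset_univ _) key2, Finset.sum_singleton]
      have hBl : B (Fin.last k) (Fin.last k) = -C (Hf H (s + k) (s + k + 1)) := by
        rw [hB, Matrix.submatrix_apply, hsk,
          hMne _ _ (by intro hh; have := congrArg Fin.val hh; simp [Fin.last] at this)]
        have e1 : s + ((Fin.castSucc (Fin.last k) : Fin (k+2)) : ℕ) = s + k := by simp [Fin.last]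
        have e2 : s + ((Fin.last (k+1) : Fin (k+2)) : ℕ) = s + k + 1 := by simp [Fin.last]; omega
        rw [e1, e2]
      have hminor : (B.submatrix (Fin.last k).succAbove (Fin.last k).succAbove).det
          = (blk H s k (by omega)).charpoly := by
        rw [hB, Matrix.submatrix_submatrix, Fin.succAbove_last]
        exact minor_eq k (by omega) _ _ (fun i => by simp)
          (fun i => by
            show ((⟨k, by omega⟩ : Fin (k+2)).succAbove (Fin.castSucc i) : ℕ) = (i : ℕ)
            rw [Fin.succAbove_of_castSucc_lt _ _ (by simp [Fin.lt_def])]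
            simp)
      rw [hBl, hminor]
      have hsign : ((Fin.last k : Fin (k+1)) : ℕ) + ((Fin.last k : Fin (k+1)) : ℕ) = 2*k := by
        simp [Fin.last]; ring
      rw [hsign]
      simp [pow_mul]
    rw [hdetB]
    have hsign : ((Fin.last (k+1) : Fin (k+2)) : ℕ) + ((⟨k, by omega⟩ : Fin (k+2)) : ℕ) = 2*k+1 := by
      simp [Fin.last]; ring
    rw [hsign, pow_succ, pow_mul]
    simp only [one_pow, neg_one_sq, one_mul, neg_mul, neg_neg, mul_neg]
    rw [← mul_assoc, ← Polynomial.C_mul, ← sq]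
  rw [hterm1, hterm2]
  ring

lemma struct {N : ℕ} (H : Matrix (Fin N) (Fin N) ℝ)
    (htri : ∀ i j : Fin N, (i : ℕ) + 1 < (j : ℕ) → H i j = 0)
    (hsym : H.IsSymm) (p : ℕ) :
    ∀ j, ∀ (hj : p + 2 + j ≤ N),
    (blk H 0 (p + 2 + j) (by omega)).charpoly
      = (blk H 0 (p + 1) (by omega)).charpoly *
          (blk H (p + 1) (j + 1) (by omega)).charpoly
        - C (Hf H p (p + 1) ^ 2) *
          ((blk H 0 p (by omega)).charpoly * (blk H (p + 2) j (by omega)).charpoly) := by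
  intro j
  induction j using Nat.strong_induction_on with
  | _ j IH =>
    match j with
    | 0 =>
      intro hj
      rw [blk_congr H (show p + 2 + 0 = p + 2 by omega) (h' := by omega),
        blk_rec H htri hsym 0 p (by omega)]
      simp only [show (0 : ℕ) + p = p by omega, show (0 : ℕ) + p + 1 = p + 1 by omega]
      rw [blk_one H (p + 1) (h := by omega), blk_zero H (p + 2) (h := by omega)]
      ring
    | 1 =>
      intro hj
      rw [blk_congr H (show p + 2 + 1 = (p + 1) + 2 by omega) (h' := by omega),
        blk_rec H htri hsym 0 (p + 1) (by omega)]
      simp only [show (0 : ℕ) + (p + 1) = p + 1 by omega,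
        show (0 : ℕ) + (p + 1) + 1 = p + 2 by omega]
      rw [blk_congr H (show p + 1 + 1 = p + 2 + 0 by omega) (h' := by omega),
        IH 0 (by omega) (by omega),
        blk_congr H (show (1 : ℕ) + 1 = 0 + 2 by omega) (h' := by omega) (s := p + 1),
        blk_rec H htri hsym (p + 1) 0 (by omega)]
      simp only [show p + 1 + 0 = p + 1 by omega, show p + 1 + 0 + 1 = p + 2 by omega]
      rw [blk_one H (p + 1) (h := by omega), blk_one H (p + 2) (h := by omega),
        blk_zero H (p + 1) (h := by omega), blk_zero H (p + 2) (h := by omega)]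
      ring
    | (j + 2) =>
      intro hj
      rw [blk_congr H (show p + 2 + (j + 2) = (p + 2 + j) + 2 by omega) (h' := by omega),
        blk_rec H htri hsym 0 (p + 2 + j) (by omega)]
      simp only [show (0 : ℕ) + (p + 2 + j) = p + 2 + j by omega,
        show p + 2 + j + 1 = p + 3 + j by omega]
      rw [blk_congr H (show p + 2 + j + 1 = p + 2 + (j + 1) by omega) (h' := by omega),
        IH (j + 1) (by omega) (by omega),
        IH j (by omega) (by omega),
        blk_congr H (show j + 2 + 1 = (j + 1) + 2 by omega) (h' := by omega) (s := p + 1),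
        blk_rec H htri hsym (p + 1) (j + 1) (by omega)]
      simp only [show p + 1 + (j + 1) = p + 2 + j by omega,
        show p + 2 + j + 1 = p + 3 + j by omega]
      rw [blk_rec H htri hsym (p + 2) j (by omega)]
      simp only [show p + 2 + j + 1 = p + 3 + j by omega]
      ring

/-- Christoffel–Darboux positivity for the Wronskian of consecutive principal
characteristic polynomials of a Jacobi matrix. -/
lemma cd_pos {N : ℕ} (H : Matrix (Fin N) (Fin N) ℝ)
    (htri : ∀ i j : Fin N, (i : ℕ) + 1 < (j : ℕ) → H i j = 0)
    (hsym : H.IsSymm)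
    (hpos : ∀ i j : Fin N, (j : ℕ) = (i : ℕ) + 1 → 0 < H i j) :
    ∀ q, ∀ (hq : q + 1 ≤ N), ∀ x : ℝ,
    0 < eval x (derivative (blk H 0 (q + 1) (by omega)).charpoly *
          (blk H 0 q (by omega)).charpoly
        - (blk H 0 (q + 1) (by omega)).charpoly *
          derivative (blk H 0 q (by omega)).charpoly) := by
  intro q
  induction q with
  | zero =>
    intro hq x
    rw [blk_zero H 0 (h := by omega), blk_one H 0 (h := by omega)]
    simp
  | succ q IH =>
    intro hq x
    have hrec := blk_rec H htri hsym 0 q (by omega)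
    simp only [show (0 : ℕ) + q = q by omega, show (0 : ℕ) + q + 1 = q + 1 by omega] at hrec
    rw [blk_congr H (show q + 1 + 1 = q + 2 by omega) (h' := by omega), hrec]
    have hpq : 0 < Hf H q (q + 1) := by
      rw [Hf, dif_pos ⟨by omega, by omega⟩]
      exact hpos _ _ rfl
    have hW := IH (by omega) x
    set P0 := (blk H 0 q (by omega : 0 + q ≤ N)).charpoly with hP0
    set P1 := (blk H 0 (q + 1) (by omega : 0 + (q+1) ≤ N)).charpoly with hP1
    have hexp : derivative ((X - C (Hf H (q + 1) (q + 1))) * P1 - C (Hf H q (q + 1) ^ 2) * P0) *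
          P1 - ((X - C (Hf H (q + 1) (q + 1))) * P1 - C (Hf H q (q + 1) ^ 2) * P0) *
          derivative P1
        = P1 * P1 + C (Hf H q (q + 1) ^ 2) * (derivative P1 * P0 - P1 * derivative P0) := by
      simp only [derivative_sub, derivative_mul, derivative_X, derivative_C, derivative_one]
      ring
    rw [hexp]
    simp only [eval_add, eval_mul, eval_sub, eval_pow, eval_C]
    have h1 : (0:ℝ) ≤ eval x P1 * eval x P1 := mul_self_nonneg _
    have h2 : 0 < Hf H q (q + 1) ^ 2 := by positivity
    have h3 : 0 < eval x (derivative P1 * P0 - P1 * derivative P0) := hW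
    simp only [eval_sub, eval_mul] at h3
    nlinarith

lemma derivative_finset_prod {ι : Type*} [DecidableEq ι] (s : Finset ι) (f : ι → ℝ[X]) :
    derivative (∏ i ∈ s, f i) = ∑ i ∈ s, (∏ j ∈ s.erase i, f j) * derivative (f i) := by
  induction s using Finset.induction_on with
  | empty => simp
  | insert a s ha ih =>
    rw [Finset.prod_insert ha, derivative_mul, ih, Finset.sum_insert ha,
      Finset.erase_insert ha, Finset.mul_sum]
    have hterm : ∀ i ∈ s, f a * ((∏ j ∈ s.erase i, f j) * derivative (f i))
        = (∏ j ∈ (insert a s).erase i, f j) * derivative (f i) := by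
      intro i hi
      rw [Finset.erase_insert_of_ne (by rintro rfl; exact ha hi), Finset.prod_insert
        (fun hh => ha (Finset.mem_of_mem_erase hh))]
      ring
    rw [Finset.sum_congr rfl hterm]
    ring

lemma eval_derivative_prod_linear {m : ℕ} (μ : Fin m → ℝ) (i : Fin m) :
    eval (μ i) (derivative (∏ l, (X - C (μ l)))) =
      ∏ l ∈ Finset.univ.erase i, (μ i - μ l) := by
  rw [derivative_finset_prod]
  rw [eval_finset_sum]
  rw [Finset.sum_eq_single i]
  · simp [eval_prod]
  · intro b _ hb
    have : eval (μ i) (∏ j ∈ Finset.univ.erase b, (X - C (μ j))) = 0 := by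
      rw [eval_prod]
      exact Finset.prod_eq_zero (Finset.mem_erase.2 ⟨Ne.symm hb, Finset.mem_univ _⟩) (by simp)
    simp [this]
  · simp

/-- Lagrange-type residue sum: for a monic polynomial `q` of degree `m` and `m+1`
distinct nodes, the sum of `q(μ i)` over the nodal products is `1`. -/
lemma sum_residues {m' m : ℕ} (hm : m' = m + 1) (μ : Fin m' → ℝ) (hinj : Function.Injective μ)
    (q : ℝ[X]) (hmo : q.Monic) (hdeg : q.natDegree = m) :
    ∑ i, eval (μ i) q / (∏ l ∈ Finset.univ.erase i, (μ i - μ l)) = 1 := by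
  subst hm
  have hden : ∀ i : Fin (m + 1), (∏ l ∈ Finset.univ.erase i, (μ i - μ l)) ≠ 0 := by
    intro i
    refine Finset.prod_ne_zero_iff.2 fun l hl => sub_ne_zero.2 fun hh => ?_
    exact (Finset.mem_erase.1 hl).1.symm (hinj hh)
  set c : Fin (m + 1) → ℝ := fun i => eval (μ i) q / (∏ l ∈ Finset.univ.erase i, (μ i - μ l))
    with hc
  set R : ℝ[X] := q - ∑ i, C (c i) * ∏ l ∈ Finset.univ.erase i, (X - C (μ l)) with hR
  have hprodmo : ∀ i : Fin (m+1), (∏ l ∈ Finset.univ.erase i, (X - C (μ l))).Monic :=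
    fun i => monic_prod_of_monic _ _ (fun l _ => monic_X_sub_C _)
  have hproddeg : ∀ i : Fin (m+1),
      (∏ l ∈ Finset.univ.erase i, (X - C (μ l))).natDegree = m := by
    intro i
    rw [natDegree_prod _ _ (fun l _ => X_sub_C_ne_zero _)]
    simp [Finset.card_erase_of_mem]
  have hRz : R = 0 := by
    apply Polynomial.eq_zero_of_natDegree_lt_card_of_eval_eq_zero R hinj
    · intro i
      rw [hR]
      simp only [eval_sub, eval_finset_sum, eval_mul, eval_C, eval_prod, eval_sub, eval_X]
      rw [Finset.sum_eq_single i]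
      · show eval (μ i) q - eval (μ i) q / (∏ l ∈ Finset.univ.erase i, (μ i - μ l)) *
            ∏ l ∈ Finset.univ.erase i, (μ i - μ l) = 0
        rw [div_mul_cancel₀ _ (hden i), sub_self]
      · intro b _ hb
        have : (∏ l ∈ Finset.univ.erase b, (μ i - μ l)) = 0 :=
          Finset.prod_eq_zero (Finset.mem_erase.2 ⟨Ne.symm hb, Finset.mem_univ _⟩) (by simp)
        rw [this, mul_zero]
      · simp
    · have h1 : R.natDegree ≤ m := by
        rw [hR]
        refine le_trans (natDegree_sub_le _ _) ?_
        rw [max_le_iff]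
        constructor
        · omega
        · refine le_trans (natDegree_sum_le _ _) ?_
          rw [Finset.fold_max_le]
          refine ⟨by omega, fun i _ => ?_⟩
          refine le_trans (natDegree_mul_le) ?_
          simp [hproddeg i]
      simpa [Fintype.card_fin] using lt_of_le_of_lt h1 (Nat.lt_succ_self m)
  rw [hR] at hRz
  have hq : q = ∑ i, C (c i) * ∏ l ∈ Finset.univ.erase i, (X - C (μ l)) := sub_eq_zero.1 hRz
  have hco := congrArg (fun p => Polynomial.coeff p m) hq
  simp only [finset_sum_coeff, coeff_C_mul] at hco
  have hqc : q.coeff m = 1 := by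
    have := hmo
    rw [Polynomial.Monic, Polynomial.leadingCoeff, hdeg] at this
    exact this
  have hpc : ∀ i : Fin (m+1), (∏ l ∈ Finset.univ.erase i, (X - C (μ l))).coeff m = 1 := by
    intro i
    have := hprodmo i
    rw [Polynomial.Monic, Polynomial.leadingCoeff, hproddeg i] at this
    exact this
  rw [hqc] at hco
  rw [show (∑ i, eval (μ i) q / (∏ l ∈ Finset.univ.erase i, (μ i - μ l)))
      = ∑ i, c i * (∏ l ∈ Finset.univ.erase i, (X - C (μ l))).coeff m from
    Finset.sum_congr rfl fun i _ => by rw [hpc i, mul_one, hc], ← hco]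

/-- A Jacobi matrix: real symmetric tridiagonal with positive off-diagonal entries. -/
def IsJacobi {N : ℕ} (H : Matrix (Fin N) (Fin N) ℝ) : Prop :=
  H.IsSymm ∧ (∀ i j : Fin N, (i : ℕ) + 1 < (j : ℕ) → H i j = 0) ∧
    (∀ i j : Fin N, (j : ℕ) = (i : ℕ) + 1 → 0 < H i j)

/-- The principal block of `H` on indices `0, …, n-1` (paper: `H₋`). -/
def Jminus {N : ℕ} (H : Matrix (Fin N) (Fin N) ℝ) (n : Fin N) :
    Matrix (Fin (n : ℕ)) (Fin (n : ℕ)) ℝ :=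
  H.submatrix (fun i => ⟨i, i.isLt.trans n.isLt⟩) (fun i => ⟨i, i.isLt.trans n.isLt⟩)

/-- The principal block of `H` on indices `n+1, …, N-1` (paper: `H₊`). -/
def Jplus {N : ℕ} (H : Matrix (Fin N) (Fin N) ℝ) (n : Fin N) :
    Matrix (Fin (N - (n : ℕ) - 1)) (Fin (N - (n : ℕ) - 1)) ℝ :=
  H.submatrix (fun i => ⟨(n : ℕ) + 1 + i, by have := i.isLt; omega⟩)
    (fun i => ⟨(n : ℕ) + 1 + i, by have := i.isLt; omega⟩)

/-- `H` with the `n`-th row and column deleted. -/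
def Jdel {N : ℕ} (H : Matrix (Fin N) (Fin N) ℝ) (n : Fin N) :
    Matrix (Fin (N - 1)) (Fin (N - 1)) ℝ :=
  H.submatrix
    (fun i => if h : (i : ℕ) < (n : ℕ) then ⟨i, h.trans n.isLt⟩
      else ⟨(i : ℕ) + 1, by have := i.isLt; omega⟩)
    (fun i => if h : (i : ℕ) < (n : ℕ) then ⟨i, h.trans n.isLt⟩
      else ⟨(i : ℕ) + 1, by have := i.isLt; omega⟩)

/-- When σ(H₋) ∩ σ(H₊) = ∅, the residues
βᵢ⁻ = −∏ⱼ(μᵢ⁻ − λⱼ) / (∏_{l≠i}(μᵢ⁻ − μₗ⁻)·∏ₗ(μᵢ⁻ − μₗ⁺)) are positive and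
aₙ₋₁² = Σᵢ βᵢ⁻. -/
theorem jacobi_beta_minus {N : ℕ} (H : Matrix (Fin N) (Fin N) ℝ) (n : Fin N)
    (hH : IsJacobi H) (h0 : 0 < (n : ℕ))
    (lam : Fin N → ℝ) (mum : Fin (n : ℕ) → ℝ) (mup : Fin (N - (n : ℕ) - 1) → ℝ)
    (hcl : H.charpoly = ∏ j, (X - C (lam j)))
    (hcm : (Jminus H n).charpoly = ∏ k, (X - C (mum k)))
    (hcp : (Jplus H n).charpoly = ∏ l, (X - C (mup l)))
    (hsm : Function.Injective mum) (hsp : Function.Injective mup)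
    (hdisj : ∀ k l, mum k ≠ mup l) :
    (∀ i, 0 < -(∏ j, (mum i - lam j)) /
        ((∏ l ∈ Finset.univ.erase i, (mum i - mum l)) *
          ∏ l, (mum i - mup l))) ∧
    (H ⟨(n : ℕ) - 1, by have := n.isLt; omega⟩ n) ^ 2 =
      ∑ i, -(∏ j, (mum i - lam j)) /
        ((∏ l ∈ Finset.univ.erase i, (mum i - mum l)) *
          ∏ l, (mum i - mup l)) := by
  obtain ⟨hsym, htri, hpos⟩ := hH
  obtain ⟨p, hp⟩ : ∃ p, (n : ℕ) = p + 1 := ⟨(n : ℕ) - 1, by omega⟩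
  have hnN : (n : ℕ) < N := n.isLt
  have hNeq : p + 2 + (N - (n : ℕ) - 1) = N := by omega
  -- identifications of blocks
  have hminus : (blk H 0 (p + 1) (by omega)).charpoly = ∏ k, (X - C (mum k)) := by
    rw [blk_congr H (show p + 1 = (n : ℕ) from hp.symm) (h' := by omega), ← hcm]
    congr 1
    ext i j
    show H _ _ = H _ _
    congr 1 <;> exact Fin.ext (by simp)
  have hplus : (blk H (p + 2) (N - (n : ℕ) - 1) (by omega)).charpoly
      = ∏ l, (X - C (mup l)) := by
    rw [← hcp]
    congr 1
    ext i j
    show H _ _ = H _ _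
    congr 1 <;> exact Fin.ext (by simp; omega)
  have hfull : (blk H 0 (p + 2 + (N - (n : ℕ) - 1)) (by omega)).charpoly
      = ∏ j, (X - C (lam j)) := by
    rw [blk_congr H hNeq (h' := by omega), ← hcl]
    congr 1
    ext i j
    show H _ _ = H _ _
    congr 1 <;> exact Fin.ext (by simp)
  have hstruct := struct H htri hsym p (N - (n : ℕ) - 1) (by omega)
  rw [hfull, hminus, hplus] at hstruct
  set q : ℝ[X] := (blk H 0 p (by omega : 0 + p ≤ N)).charpoly with hqdef
  -- the coupling entry
  set a : ℝ := Hf H p (p + 1) with hadef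
  have ha : 0 < a := by
    rw [hadef, Hf, dif_pos ⟨by omega, by omega⟩]
    exact hpos _ _ rfl
  have haH : H ⟨(n : ℕ) - 1, by have := n.isLt; omega⟩ n = a := by
    rw [hadef, Hf, dif_pos ⟨by omega, by omega⟩]
    congr 1 <;> exact Fin.ext (by simp; omega)
  -- nonvanishing of denominators
  have hD : ∀ i, (∏ l ∈ Finset.univ.erase i, (mum i - mum l)) ≠ 0 := by
    intro i
    refine Finset.prod_ne_zero_iff.2 fun l hl => sub_ne_zero.2 fun hh => ?_
    exact (Finset.mem_erase.1 hl).1.symm (hsm hh)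
  have hPp : ∀ i, (∏ l, (mum i - mup l)) ≠ 0 := fun i =>
    Finset.prod_ne_zero_iff.2 fun l _ => sub_ne_zero.2 (hdisj i l)
  -- evaluation of the structural identity at mum i
  have hPm0 : ∀ i, (∏ k, (mum i - mum k)) = 0 := fun i =>
    Finset.prod_eq_zero (Finset.mem_univ i) (by simp)
  have hnum : ∀ i, (∏ j, (mum i - lam j))
      = -(a ^ 2 * eval (mum i) q * ∏ l, (mum i - mup l)) := by
    intro i
    have h := congrArg (eval (mum i)) hstruct
    simp only [eval_prod, eval_sub, eval_X, eval_C, eval_mul, eval_pow] at h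
    rw [hPm0 i, zero_mul] at h
    rw [h]
    ring
  -- positivity from Christoffel–Darboux
  have hcd : ∀ i, 0 < (∏ l ∈ Finset.univ.erase i, (mum i - mum l)) * eval (mum i) q := by
    intro i
    have h := cd_pos H htri hsym hpos p (by omega) (mum i)
    rw [hminus] at h
    simp only [eval_sub, eval_mul] at h
    rw [eval_derivative_prod_linear mum i, eval_prod] at h
    simp only [eval_sub, eval_X, eval_C] at h
    rw [hPm0 i, zero_mul, sub_zero] at h
    exact h
  have hDsq : ∀ i, 0 < (∏ l ∈ Finset.univ.erase i, (mum i - mum l)) ^ 2 := fun i =>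
    lt_of_le_of_ne (sq_nonneg _) (Ne.symm (pow_ne_zero 2 (hD i)))
  have hratio : ∀ i, 0 < eval (mum i) q / (∏ l ∈ Finset.univ.erase i, (mum i - mum l)) := by
    intro i
    have heq : eval (mum i) q / (∏ l ∈ Finset.univ.erase i, (mum i - mum l))
        = ((∏ l ∈ Finset.univ.erase i, (mum i - mum l)) * eval (mum i) q) /
          (∏ l ∈ Finset.univ.erase i, (mum i - mum l)) ^ 2 := by
      rw [sq]
      rw [mul_div_mul_left _ _ (hD i)]
    rw [heq]
    exact div_pos (hcd i) (hDsq i)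
  have hterm : ∀ i, -(∏ j, (mum i - lam j)) /
      ((∏ l ∈ Finset.univ.erase i, (mum i - mum l)) * ∏ l, (mum i - mup l))
      = a ^ 2 * (eval (mum i) q / (∏ l ∈ Finset.univ.erase i, (mum i - mum l))) := by
    intro i
    rw [hnum i, neg_neg, mul_div_mul_right _ _ (hPp i), mul_div_assoc]
  constructor
  · intro i
    rw [hterm i]
    exact mul_pos (by positivity) (hratio i)
  · have hsum : ∑ i, eval (mum i) q / (∏ l ∈ Finset.univ.erase i, (mum i - mum l)) = 1 :=
      sum_residues hp mum hsm q (Matrix.charpoly_monic _) (by simp [hqdef])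
    calc (H ⟨(n : ℕ) - 1, by have := n.isLt; omega⟩ n) ^ 2
        = a ^ 2 * ∑ i, eval (mum i) q / (∏ l ∈ Finset.univ.erase i, (mum i - mum l)) := by
          rw [haH, hsum, mul_one]
      _ = ∑ i, a ^ 2 * (eval (mum i) q / (∏ l ∈ Finset.univ.erase i, (mum i - mum l))) := by
          rw [Finset.mul_sum]
      _ = _ := Finset.sum_congr rfl fun i _ => (hterm i).symm
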